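/- Let G and Ĝ be k×n generator matrices of self-dual codes C and Ĉ with G = [I_k | M]P and Ĝ = [I_k | M̂]P̂ for permutation matrices P, P̂ and matrices M, M̂ with MMᵀ = M̂M̂ᵀ = −I_k. Then A = P⁻¹ · diag(I_k, −Mᵀ M̂) · P̂ satisfies AAᵀ = I_n and GA = Ĝ. -/

import Mathlib

open Matrix BigOperators

lemma perm_mul_transpose {k : ℕ} {F : Type*} [Field F] (σ : Equiv.Perm (Fin k ⊕ Fin k)) :
    (σ.permMatrix F) * (σ.permMatrix F)ᵀ = 1 := by
  rw [← PEquiv.toMatrix_symm, ← Equiv.toPEquiv_symm, ← PEquiv.toMatrix_trans,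
    ← Equiv.toPEquiv_trans]
  simp

lemma perm_inv_eq_transpose {k : ℕ} {F : Type*} [Field F] (σ : Equiv.Perm (Fin k ⊕ Fin k)) :
    (σ.permMatrix F)⁻¹ = (σ.permMatrix F)ᵀ :=
  inv_eq_right_inv (perm_mul_transpose σ)

/-- If `G = [I_k | M] P` and `Ĝ = [I_k | M̂] P̂` generate self-dual codes
(`MMᵀ = M̂M̂ᵀ = -I_k`), then `A = P⁻¹ · diag(I_k, -Mᵀ M̂) · P̂` is orthogonal and
maps `G` to `Ĝ`. -/
theorem orthogonal_map_between_systematic_selfDual {k : ℕ} {F : Type*} [Field F] [Fintype F]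
    (M Mhat : Matrix (Fin k) (Fin k) F)
    (hM : M * Mᵀ = -1) (hMhat : Mhat * Mhatᵀ = -1)
    (σ σhat : Equiv.Perm (Fin k ⊕ Fin k)) :
    let P : Matrix (Fin k ⊕ Fin k) (Fin k ⊕ Fin k) F := σ.permMatrix F
    let Phat : Matrix (Fin k ⊕ Fin k) (Fin k ⊕ Fin k) F := σhat.permMatrix F
    let A : Matrix (Fin k ⊕ Fin k) (Fin k ⊕ Fin k) F :=
      P⁻¹ * Matrix.fromBlocks (1 : Matrix (Fin k) (Fin k) F) 0 0 (-(Mᵀ * Mhat)) * Phat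
    A * Aᵀ = 1 ∧
      Matrix.fromCols (1 : Matrix (Fin k) (Fin k) F) M * P * A =
        Matrix.fromCols (1 : Matrix (Fin k) (Fin k) F) Mhat * Phat := by
  intro P Phat A
  have hMT : Mᵀ * M = -1 := by
    have h1 : M * (-Mᵀ) = 1 := by rw [Matrix.mul_neg, hM, neg_neg]
    have h2 : (-Mᵀ) * M = 1 := mul_eq_one_comm.mp h1
    rw [Matrix.neg_mul] at h2
    exact neg_eq_iff_eq_neg.mp h2
  have hPinv : P⁻¹ = Pᵀ := perm_inv_eq_transpose σ
  have hPP : P * Pᵀ = 1 := perm_mul_transpose σ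
  have hPhat : Phat * Phatᵀ = 1 := perm_mul_transpose σhat
  have hPTP : Pᵀ * P = 1 := mul_eq_one_comm.mp hPP
  have hPhatT : Phatᵀ * Phat = 1 := mul_eq_one_comm.mp hPhat
  set B : Matrix (Fin k ⊕ Fin k) (Fin k ⊕ Fin k) F :=
    Matrix.fromBlocks (1 : Matrix (Fin k) (Fin k) F) 0 0 (-(Mᵀ * Mhat)) with hB
  have hkey : Mᵀ * Mhat * (Mhatᵀ * M) = 1 := by
    have : Mᵀ * Mhat * (Mhatᵀ * M) = Mᵀ * (Mhat * Mhatᵀ) * M := by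
      simp only [Matrix.mul_assoc]
    rw [this, hMhat, Matrix.mul_neg, Matrix.mul_one, Matrix.neg_mul, hMT, neg_neg]
  have hBBT : B * Bᵀ = 1 := by
    rw [hB, Matrix.fromBlocks_transpose, Matrix.fromBlocks_multiply]
    have h3 : -(Mᵀ * Mhat) * (-(Mᵀ * Mhat))ᵀ = 1 := by
      rw [Matrix.transpose_neg, Matrix.transpose_mul, Matrix.transpose_transpose,
        Matrix.neg_mul, Matrix.mul_neg, neg_neg, hkey]
    rw [h3]
    simp [← Matrix.fromBlocks_one]
  constructor
  · have : A * Aᵀ = Pᵀ * B * (Phat * Phatᵀ) * Bᵀ * P := by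
      simp [A, hPinv, Matrix.transpose_mul, Matrix.mul_assoc, hB]
    rw [this, hPhat, Matrix.mul_one, Matrix.mul_assoc Pᵀ B, hBBT, Matrix.mul_one, hPTP]
  · have : Matrix.fromCols (1 : Matrix (Fin k) (Fin k) F) M * P * A =
        Matrix.fromCols (1 : Matrix (Fin k) (Fin k) F) M * B * Phat := by
      simp [A, hPinv, Matrix.mul_assoc, ← Matrix.mul_assoc P Pᵀ, hPP, hB]
    rw [this, hB, Matrix.fromCols_mul_fromBlocks]
    have h4 : M * -(Mᵀ * Mhat) = Mhat := by
      rw [Matrix.mul_neg, ← Matrix.mul_assoc, hM, Matrix.neg_mul, neg_neg, Matrix.one_mul]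
    simp [h4]
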